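/- Let H be a real Hilbert space, g : [0,∞) → H continuous, δ > 0, A self-adjoint nonnegative bounded with projection Q onto (ker A)^⊥ satisfying |Qu|² ≤ (1/ν)|A^{1/2}u|², μ = min{1/2, ν/2, δ/2, ν/(5δ)}, and let u be a C² solution of u'' + 2δu' + Au = g on an interval (a,b) with u(t) ≠ 0 for all t ∈ (a,b). For d ≥ 0 define G_d(t) = (|u'(t)|² + |A^{1/2}u(t)|²)/|u(t)|^{2+d} and Ĝ_d(t) = (|u'(t)|² + |A^{1/2}u(t)|² + 2μ⟨u'(t), Qu(t)⟩)/|u(t)|^{2+d}. Then for all t ∈ (a,b): Ĝ_d'(t) ≤ -(μ/2)Ĝ_d(t) + (2/δ)|g(t)|²/|u(t)|^{2+d} + (2+d)|u(t)|^{d/2} · G_d(t)^{1/2} · Ĝ_d(t). -/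

import Mathlib

set_option maxHeartbeats 1000000

open Real

local notation "⟪" x ", " y "⟫" => @inner ℝ _ _ x y

private lemma stmt10_div_step (δ L R G2 : ℝ) (hδ : 0 < δ) (h : (L - R) * δ ≤ 2 * G2) :
    L ≤ R + (2/δ) * G2 := by
  have h2 : L - R ≤ 2 * G2 / δ := by
    rw [le_div_iff₀ hδ]; exact h
  have h3 : (2/δ) * G2 = 2 * G2 / δ := by ring
  linarith

private lemma stmt10_key (δ ν μ G x y q p m1 m2 m3 : ℝ)
    (hδ : 0 < δ) (hν : 0 < ν) (hμ0 : 0 < μ) (hμ3 : 2*μ ≤ δ) (hμ4 : 5*δ*μ ≤ ν)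
    (hG : 0 ≤ G) (hx : 0 ≤ x) (hq : 0 ≤ q) (hy : 0 ≤ y)
    (h1 : m1 ≤ G*x) (h2 : m2 ≤ G*q) (h3 : -(x*q) ≤ m3)
    (hqy : ν*q^2 ≤ y^2) (hpx : p^2 ≤ x^2) :
    (2*m1 - 4*δ*x^2 + 2*μ*p^2 + 2*μ*m2 - 4*δ*μ*m3 - 2*μ*y^2) * δ
      ≤ (-(μ/2)*(x^2 + y^2 + 2*μ*m3)) * δ + 2*G^2 := by
  have s1 : 2*δ*m1 ≤ G^2 + δ^2*x^2 := by
    nlinarith [sq_nonneg (G - δ*x),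
      mul_le_mul_of_nonneg_left h1 (by positivity : (0:ℝ) ≤ 2*δ)]
  have s2 : 2*δ*μ*m2 ≤ G^2 + δ^2*μ^2*q^2 := by
    nlinarith [sq_nonneg (G - δ*μ*q),
      mul_le_mul_of_nonneg_left h2 (by positivity : (0:ℝ) ≤ 2*δ*μ)]
  have s3a : 5*δ*μ*q^2 ≤ y^2 :=
    le_trans (mul_le_mul_of_nonneg_right hμ4 (sq_nonneg q)) hqy
  have s3 : δ^2*μ^2*q^2 ≤ (δ*μ/5)*y^2 := by
    nlinarith [mul_le_mul_of_nonneg_left s3a (by positivity : (0:ℝ) ≤ δ*μ/5)]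
  have c0 : 0 ≤ 4*δ*μ - μ^2 := by nlinarith [mul_le_mul_of_nonneg_left hμ3 hμ0.le]
  have s4a : (δ*(4*δ*μ - μ^2)) * (-m3) ≤ (δ*(4*δ*μ - μ^2)) * (x*q) :=
    mul_le_mul_of_nonneg_left (neg_le.mpr h3) (mul_nonneg hδ.le c0)
  have s4b : (δ*(4*δ*μ - μ^2)) * (x*q) ≤ δ^2*x^2 + 4*δ^2*μ^2*q^2 := by
    nlinarith [mul_nonneg (sq_nonneg δ) (sq_nonneg (x - 2*μ*q)),
      mul_nonneg hδ.le (mul_nonneg (sq_nonneg μ) (mul_nonneg hx hq))]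
  have s5 : 2*δ*μ*p^2 ≤ 2*δ*μ*x^2 :=
    mul_le_mul_of_nonneg_left hpx (by positivity)
  have s6 : δ*(2*μ)*x^2 ≤ δ*δ*x^2 :=
    mul_le_mul_of_nonneg_right (mul_le_mul_of_nonneg_left hμ3 hδ.le) (sq_nonneg x)
  have s7 : 0 ≤ δ*μ*y^2 := by positivity
  have s8 : 0 ≤ δ*δ*x^2 := by positivity
  linarith [s1, s2, s3, s4a, s4b, s5, s6, s7, s8]

private lemma stmt10_Epos (ν μ x y q m3 : ℝ) (hν : 0 < ν) (hμ0 : 0 ≤ μ)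
    (hμ1 : 2*μ ≤ 1) (hμ2 : 2*μ ≤ ν) (hx : 0 ≤ x) (hq : 0 ≤ q)
    (h3 : -(x*q) ≤ m3) (hqy : ν*q^2 ≤ y^2) : 0 ≤ x^2 + y^2 + 2*μ*m3 := by
  nlinarith [sq_nonneg (x - 2*μ*q),
    mul_le_mul_of_nonneg_left h3 (by positivity : (0:ℝ) ≤ 2*μ),
    mul_le_mul_of_nonneg_left hqy hμ0,
    mul_le_mul_of_nonneg_right hμ2 (mul_nonneg hμ0 (sq_nonneg q)),
    mul_le_mul_of_nonneg_right hμ1 (sq_nonneg y), sq_nonneg y,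
    mul_nonneg hμ0 (sq_nonneg q)]

/-- Differential inequality for the modified generalized Dirichlet quotient Ĝ_d. -/
theorem stmt10 {H : Type*} [NormedAddCommGroup H] [InnerProductSpace ℝ H] [CompleteSpace H]
    (A S Q : H →L[ℝ] H)
    (hA : IsSelfAdjoint A) (hApos : ∀ u : H, 0 ≤ (@inner ℝ H _ (A u) (u)))
    (hS : IsSelfAdjoint S) (hSpos : ∀ u : H, 0 ≤ (@inner ℝ H _ (S u) (u))) (hSA : S.comp S = A)
    (hQ1 : Q.comp Q = Q) (hQ2 : IsSelfAdjoint Q)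
    (hQ3 : LinearMap.range (Q : H →ₗ[ℝ] H) = (LinearMap.ker (A : H →ₗ[ℝ] H))ᗮ)
    (ν δ : ℝ) (hν : 0 < ν) (hδ : 0 < δ)
    (hQbound : ∀ u : H, ‖Q u‖^2 ≤ (1/ν) * ‖S u‖^2)
    (μ : ℝ) (hμ : μ = min (min (1/2) (ν/2)) (min (δ/2) (ν/(5*δ))))
    (g : ℝ → H) (hg : Continuous g)
    (a b : ℝ) (u : ℝ → H) (hu : ContDiff ℝ 2 u)
    (hODE : ∀ t ∈ Set.Ioo a b, deriv (deriv u) t + (2*δ) • deriv u t + A (u t) = g t)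
    (hne : ∀ t ∈ Set.Ioo a b, u t ≠ 0)
    (d : ℝ) (hd : 0 ≤ d) :
    ∀ t ∈ Set.Ioo a b,
      deriv (fun s =>
          (‖deriv u s‖^2 + ‖S (u s)‖^2 + 2*μ*(@inner ℝ H _ (deriv u s) (Q (u s)))) / ‖u s‖ ^ ((2:ℝ)+d)) t ≤
        -(μ/2) * ((‖deriv u t‖^2 + ‖S (u t)‖^2 + 2*μ*(@inner ℝ H _ (deriv u t) (Q (u t)))) / ‖u t‖ ^ ((2:ℝ)+d))
        + (2/δ) * (‖g t‖^2 / ‖u t‖ ^ ((2:ℝ)+d))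
        + (2+d) * ‖u t‖ ^ (d/2)
            * Real.sqrt ((‖deriv u t‖^2 + ‖S (u t)‖^2) / ‖u t‖ ^ ((2:ℝ)+d))
            * ((‖deriv u t‖^2 + ‖S (u t)‖^2 + 2*μ*(@inner ℝ H _ (deriv u t) (Q (u t)))) / ‖u t‖ ^ ((2:ℝ)+d)) := by
  intro t ht
  -- basic facts about μ
  have hδ5 : (0:ℝ) < 5*δ := by linarith
  have hμa : μ ≤ 1/2 := by rw [hμ]; exact le_trans (min_le_left _ _) (min_le_left _ _)
  have hμb : μ ≤ ν/2 := by rw [hμ]; exact le_trans (min_le_left _ _) (min_le_right _ _)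
  have hμc : μ ≤ δ/2 := by rw [hμ]; exact le_trans (min_le_right _ _) (min_le_left _ _)
  have hμd : μ ≤ ν/(5*δ) := by rw [hμ]; exact le_trans (min_le_right _ _) (min_le_right _ _)
  have hμpos : 0 < μ := by
    rw [hμ]
    exact lt_min (lt_min (by norm_num) (by positivity)) (lt_min (by positivity) (by positivity))
  have hμ4 : 5*δ*μ ≤ ν := by
    rw [le_div_iff₀ hδ5] at hμd; linarith
  -- differentiability
  have hu1 : Differentiable ℝ u := hu.differentiable (by norm_num)
  set v := deriv u with hvdef
  have hv1 : ContDiff ℝ 1 v := by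
    have h2 : (2 : WithTop ℕ∞) = 1 + 1 := by norm_num
    rw [h2] at hu
    exact (contDiff_succ_iff_deriv.mp hu).2.2
  have hvd : Differentiable ℝ v := hv1.differentiable one_ne_zero
  set w := deriv v with hwdef
  have hut : HasDerivAt u (v t) t := (hu1 t).hasDerivAt
  have hvt : HasDerivAt v (w t) t := (hvd t).hasDerivAt
  have hSu : HasDerivAt (fun s => S (u s)) (S (v t)) t :=
    S.hasFDerivAt.comp_hasDerivAt t hut
  have hQu : HasDerivAt (fun s => Q (u s)) (Q (v t)) t :=
    Q.hasFDerivAt.comp_hasDerivAt t hut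
  have e1 : HasDerivAt (fun s => ⟪v s, v s⟫) (⟪v t, w t⟫ + ⟪w t, v t⟫) t :=
    hvt.inner ℝ hvt
  have e2 : HasDerivAt (fun s => ⟪S (u s), S (u s)⟫)
      (⟪S (u t), S (v t)⟫ + ⟪S (v t), S (u t)⟫) t := hSu.inner ℝ hSu
  have e3 : HasDerivAt (fun s => ⟪v s, Q (u s)⟫)
      (⟪v t, Q (v t)⟫ + ⟪w t, Q (u t)⟫) t := hvt.inner ℝ hQu
  have eE : HasDerivAt (fun s => ⟪v s, v s⟫ + ⟪S (u s), S (u s)⟫ + 2*μ*⟪v s, Q (u s)⟫)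
      ((⟪v t, w t⟫ + ⟪w t, v t⟫) + (⟪S (u t), S (v t)⟫ + ⟪S (v t), S (u t)⟫)
        + 2*μ*(⟪v t, Q (v t)⟫ + ⟪w t, Q (u t)⟫)) t :=
    (e1.add e2).add (HasDerivAt.const_mul (2*μ) e3)
  have hR : HasDerivAt (fun s => ⟪u s, u s⟫) (⟪u t, v t⟫ + ⟪v t, u t⟫) t :=
    hut.inner ℝ hut
  have hr0 : (0:ℝ) < ‖u t‖ := norm_pos_iff.mpr (hne t ht)
  have hRpos : (0:ℝ) < ⟪u t, u t⟫ := by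
    rw [real_inner_self_eq_norm_sq]; positivity
  have hN : HasDerivAt (fun s => ⟪u s, u s⟫ ^ (((2:ℝ)+d)/2))
      ((⟪u t, v t⟫ + ⟪v t, u t⟫) * (((2:ℝ)+d)/2) * ⟪u t, u t⟫ ^ (((2:ℝ)+d)/2 - 1)) t :=
    hR.rpow_const (Or.inl hRpos.ne')
  have hNne : ⟪u t, u t⟫ ^ (((2:ℝ)+d)/2) ≠ 0 := (Real.rpow_pos_of_pos hRpos _).ne'
  have hdiv : HasDerivAt
      (fun s => (⟪v s, v s⟫ + ⟪S (u s), S (u s)⟫ + 2*μ*⟪v s, Q (u s)⟫)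
          / ⟪u s, u s⟫ ^ (((2:ℝ)+d)/2))
      ((((⟪v t, w t⟫ + ⟪w t, v t⟫) + (⟪S (u t), S (v t)⟫ + ⟪S (v t), S (u t)⟫)
        + 2*μ*(⟪v t, Q (v t)⟫ + ⟪w t, Q (u t)⟫)) * ⟪u t, u t⟫ ^ (((2:ℝ)+d)/2)
        - (⟪v t, v t⟫ + ⟪S (u t), S (u t)⟫ + 2*μ*⟪v t, Q (u t)⟫)
          * ((⟪u t, v t⟫ + ⟪v t, u t⟫) * (((2:ℝ)+d)/2) * ⟪u t, u t⟫ ^ (((2:ℝ)+d)/2 - 1)))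
        / (⟪u t, u t⟫ ^ (((2:ℝ)+d)/2))^2) t :=
    eE.div hN hNne
  -- rewrite the function in the goal into inner-product form
  have hfun : (fun s => (‖v s‖^2 + ‖S (u s)‖^2 + 2*μ*⟪v s, Q (u s)⟫) / ‖u s‖ ^ ((2:ℝ)+d))
      = (fun s => (⟪v s, v s⟫ + ⟪S (u s), S (u s)⟫ + 2*μ*⟪v s, Q (u s)⟫)
          / ⟪u s, u s⟫ ^ (((2:ℝ)+d)/2)) := by
    funext s
    rw [real_inner_self_eq_norm_sq, real_inner_self_eq_norm_sq, real_inner_self_eq_norm_sq]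
    congr 1
    rw [← Real.rpow_natCast ‖u s‖ 2, ← Real.rpow_mul (norm_nonneg _)]
    congr 1
    push_cast; ring
  rw [hfun, hdiv.deriv]
  -- rewrite inner-self terms and rpow terms
  have hden1 : ((‖u t‖^2 : ℝ)) ^ (((2:ℝ)+d)/2) = ‖u t‖ ^ ((2:ℝ)+d) := by
    rw [← Real.rpow_natCast ‖u t‖ 2, ← Real.rpow_mul (norm_nonneg _)]
    congr 1; push_cast; ring
  have hden2 : ((‖u t‖^2 : ℝ)) ^ (((2:ℝ)+d)/2 - 1) = ‖u t‖ ^ d := by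
    rw [← Real.rpow_natCast ‖u t‖ 2, ← Real.rpow_mul (norm_nonneg _)]
    congr 1; push_cast; ring
  simp only [real_inner_self_eq_norm_sq]
  rw [hden1, hden2, real_inner_comm (v t) (u t)]
  -- abbreviations
  have hNt : (0:ℝ) < ‖u t‖ ^ ((2:ℝ)+d) := Real.rpow_pos_of_pos hr0 _
  -- the ODE at t
  have hwt : w t = g t - (2*δ) • v t - A (u t) := by
    have h := hODE t ht
    rw [← h]; abel
  -- inner product identities
  have ivw : ⟪v t, w t⟫ = ⟪v t, g t⟫ - (2*δ)*⟪v t, v t⟫ - ⟪v t, A (u t)⟫ := by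
    rw [hwt, inner_sub_right, inner_sub_right, real_inner_smul_right]
  have iwv : ⟪w t, v t⟫ = ⟪g t, v t⟫ - (2*δ)*⟪v t, v t⟫ - ⟪A (u t), v t⟫ := by
    rw [hwt, inner_sub_left, inner_sub_left, real_inner_smul_left]
  have iwq : ⟪w t, Q (u t)⟫
      = ⟪g t, Q (u t)⟫ - (2*δ)*⟪v t, Q (u t)⟫ - ⟪A (u t), Q (u t)⟫ := by
    rw [hwt, inner_sub_left, inner_sub_left, real_inner_smul_left]
  have hSSu : ∀ x : H, S (S x) = A x := by
    intro x; rw [← hSA]; rfl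
  have iSS : ⟪S (u t), S (v t)⟫ = ⟪v t, A (u t)⟫ :=
    calc ⟪S (u t), S (v t)⟫ = ⟪S (S (u t)), v t⟫ := (hS.isSymmetric (S (u t)) (v t)).symm
      _ = ⟪A (u t), v t⟫ := by rw [hSSu]
      _ = ⟪v t, A (u t)⟫ := real_inner_comm _ _
  have iSS2 : ⟪S (v t), S (u t)⟫ = ⟪v t, A (u t)⟫ := by
    rw [real_inner_comm]; exact iSS
  have hQQ : ∀ x : H, Q (Q x) = Q x := by
    intro x
    conv_rhs => rw [← hQ1]
    rfl
  have iQv : ⟪v t, Q (v t)⟫ = ‖Q (v t)‖^2 :=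
    calc ⟪v t, Q (v t)⟫ = ⟪Q (v t), Q (v t)⟫ := by
          conv_lhs => rw [← hQQ (v t)]
          rw [real_inner_comm]
          exact hQ2.isSymmetric (Q (v t)) (v t)
      _ = ‖Q (v t)‖^2 := real_inner_self_eq_norm_sq _
  have iAQ : ⟪A (u t), Q (u t)⟫ = ‖S (u t)‖^2 := by
    have hmem : A (u t) ∈ (LinearMap.ker (A : H →ₗ[ℝ] H))ᗮ := by
      rw [Submodule.mem_orthogonal]
      intro k hk
      have hk' : A k = 0 := hk
      calc ⟪k, A (u t)⟫ = ⟪A k, u t⟫ := (hA.isSymmetric k (u t)).symm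
        _ = 0 := by rw [hk']; simp
    have hmem' : A (u t) ∈ LinearMap.range (Q : H →ₗ[ℝ] H) := by rw [hQ3]; exact hmem
    obtain ⟨z, hz⟩ := hmem'
    have hQA : Q (A (u t)) = A (u t) := by
      rw [← hz]; exact hQQ z
    calc ⟪A (u t), Q (u t)⟫ = ⟪Q (A (u t)), u t⟫ := (hQ2.isSymmetric (A (u t)) (u t)).symm
      _ = ⟪A (u t), u t⟫ := by rw [hQA]
      _ = ⟪S (S (u t)), u t⟫ := by rw [hSSu]
      _ = ⟪S (u t), S (u t)⟫ := hS.isSymmetric (S (u t)) (u t)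
      _ = ‖S (u t)‖^2 := real_inner_self_eq_norm_sq _
  -- scalar bounds
  have hb1 : ⟪g t, v t⟫ ≤ ‖g t‖ * ‖v t‖ := real_inner_le_norm _ _
  have hb2 : ⟪g t, Q (u t)⟫ ≤ ‖g t‖ * ‖Q (u t)‖ := real_inner_le_norm _ _
  have hb3 : -(‖v t‖ * ‖Q (u t)‖) ≤ ⟪v t, Q (u t)⟫ :=
    (abs_le.mp (abs_real_inner_le_norm _ _)).1
  have hb4 : ‖Q (v t)‖^2 ≤ ‖v t‖^2 := by
    have h := real_inner_le_norm (v t) (Q (v t))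
    rw [iQv] at h
    nlinarith [sq_nonneg (‖v t‖ - ‖Q (v t)‖), norm_nonneg (Q (v t)), norm_nonneg (v t)]
  have hb5 : ν * ‖Q (u t)‖^2 ≤ ‖S (u t)‖^2 := by
    have h := mul_le_mul_of_nonneg_left (hQbound (u t)) hν.le
    have h2 : ν * ((1/ν) * ‖S (u t)‖^2) = ‖S (u t)‖^2 := by field_simp
    linarith
  -- Step A : the energy estimate
  have hstepA : (⟪v t, w t⟫ + ⟪w t, v t⟫) + (⟪S (u t), S (v t)⟫ + ⟪S (v t), S (u t)⟫)
      + 2*μ*(⟪v t, Q (v t)⟫ + ⟪w t, Q (u t)⟫)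
      ≤ -(μ/2)*(‖v t‖^2 + ‖S (u t)‖^2 + 2*μ*⟪v t, Q (u t)⟫) + (2/δ)*‖g t‖^2 := by
    rw [ivw, iwv, iwq, iSS, iSS2, iQv, iAQ, real_inner_comm (A (u t)) (v t),
      real_inner_comm (g t) (v t), real_inner_self_eq_norm_sq]
    apply stmt10_div_step _ _ _ _ hδ
    have hkey := stmt10_key δ ν μ (‖g t‖) (‖v t‖) (‖S (u t)‖) (‖Q (u t)‖) (‖Q (v t)‖)
      (⟪g t, v t⟫) (⟪g t, Q (u t)⟫) (⟪v t, Q (u t)⟫) hδ hν hμpos (by linarith) hμ4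
      (norm_nonneg _) (norm_nonneg _) (norm_nonneg _) (norm_nonneg _) hb1 hb2 hb3 hb5 hb4
    linarith [hkey]
  -- nonnegativity of the energy numerator
  have hEt0 : 0 ≤ ‖v t‖^2 + ‖S (u t)‖^2 + 2*μ*⟪v t, Q (u t)⟫ :=
    stmt10_Epos ν μ (‖v t‖) (‖S (u t)‖) (‖Q (u t)‖) (⟪v t, Q (u t)⟫) hν hμpos.le
      (by linarith) (by linarith) (norm_nonneg _) (norm_nonneg _) hb3 hb5
  -- Step B : the correction term estimate
  have hm : -⟪v t, u t⟫ ≤ Real.sqrt (‖v t‖^2 + ‖S (u t)‖^2) * ‖u t‖ := by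
    have h1 : -⟪v t, u t⟫ ≤ ‖v t‖ * ‖u t‖ :=
      neg_le.mp ((abs_le.mp (abs_real_inner_le_norm _ _)).1)
    have h2 : ‖v t‖ ≤ Real.sqrt (‖v t‖^2 + ‖S (u t)‖^2) := by
      rw [show ‖v t‖ = Real.sqrt (‖v t‖^2) from (Real.sqrt_sq (norm_nonneg _)).symm]
      exact Real.sqrt_le_sqrt (by nlinarith [sq_nonneg ‖S (u t)‖, Real.sq_sqrt (sq_nonneg ‖v t‖)])
    calc -⟪v t, u t⟫ ≤ ‖v t‖ * ‖u t‖ := h1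
      _ ≤ Real.sqrt (‖v t‖^2 + ‖S (u t)‖^2) * ‖u t‖ :=
        mul_le_mul_of_nonneg_right h2 (norm_nonneg _)
  have hsq0 : (‖u t‖ ^ (d/2)) ^ 2 = ‖u t‖ ^ d := by
    rw [← Real.rpow_natCast (‖u t‖ ^ (d/2)) 2, ← Real.rpow_mul (norm_nonneg _)]
    congr 1; push_cast; ring
  have hsq1 : ‖u t‖ ^ (d/2) = Real.sqrt (‖u t‖ ^ d) := by
    rw [← hsq0, Real.sqrt_sq (Real.rpow_nonneg (norm_nonneg _) _)]
  have hrd : ‖u t‖ ^ d * ‖u t‖^2 = ‖u t‖ ^ ((2:ℝ)+d) := by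
    rw [← Real.rpow_natCast ‖u t‖ 2, ← Real.rpow_add hr0]
    congr 1; push_cast; ring
  have hrd' : ‖u t‖ ^ d = ‖u t‖ ^ ((2:ℝ)+d) / ‖u t‖^2 := by
    rw [eq_div_iff (by positivity)]; exact hrd
  have hsq3 : ‖u t‖ ^ d * ((‖v t‖^2 + ‖S (u t)‖^2) / ‖u t‖ ^ ((2:ℝ)+d))
      = (‖v t‖^2 + ‖S (u t)‖^2) / ‖u t‖^2 := by
    rw [hrd']; field_simp
  have hsq4 : Real.sqrt ((‖v t‖^2 + ‖S (u t)‖^2) / ‖u t‖^2)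
      = Real.sqrt (‖v t‖^2 + ‖S (u t)‖^2) / ‖u t‖ := by
    rw [Real.sqrt_div (by positivity), Real.sqrt_sq hr0.le]
  have hT3 : (2+d) * ‖u t‖ ^ (d/2) * Real.sqrt ((‖v t‖^2 + ‖S (u t)‖^2) / ‖u t‖ ^ ((2:ℝ)+d))
      * ((‖v t‖^2 + ‖S (u t)‖^2 + 2*μ*⟪v t, Q (u t)⟫) / ‖u t‖ ^ ((2:ℝ)+d))
      = (2+d) * (Real.sqrt (‖v t‖^2 + ‖S (u t)‖^2) / ‖u t‖)
        * ((‖v t‖^2 + ‖S (u t)‖^2 + 2*μ*⟪v t, Q (u t)⟫) / ‖u t‖ ^ ((2:ℝ)+d)) := by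
    have h5 : Real.sqrt (‖u t‖ ^ d) * Real.sqrt ((‖v t‖^2 + ‖S (u t)‖^2) / ‖u t‖ ^ ((2:ℝ)+d))
        = Real.sqrt (‖v t‖^2 + ‖S (u t)‖^2) / ‖u t‖ := by
      rw [← Real.sqrt_mul (Real.rpow_nonneg (norm_nonneg _) _), hsq3, hsq4]
    rw [hsq1]
    linear_combination ((2+d) * ((‖v t‖^2 + ‖S (u t)‖^2 + 2*μ*⟪v t, Q (u t)⟫)
      / ‖u t‖ ^ ((2:ℝ)+d))) * h5
  have hstepB : -((‖v t‖^2 + ‖S (u t)‖^2 + 2*μ*⟪v t, Q (u t)⟫)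
        * ((⟪v t, u t⟫ + ⟪v t, u t⟫) * (((2:ℝ)+d)/2) * ‖u t‖ ^ d))
        / (‖u t‖ ^ ((2:ℝ)+d))^2
      ≤ (2+d) * ‖u t‖ ^ (d/2) * Real.sqrt ((‖v t‖^2 + ‖S (u t)‖^2) / ‖u t‖ ^ ((2:ℝ)+d))
        * ((‖v t‖^2 + ‖S (u t)‖^2 + 2*μ*⟪v t, Q (u t)⟫) / ‖u t‖ ^ ((2:ℝ)+d)) := by
    rw [hT3]
    have hLHS : -((‖v t‖^2 + ‖S (u t)‖^2 + 2*μ*⟪v t, Q (u t)⟫)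
          * ((⟪v t, u t⟫ + ⟪v t, u t⟫) * (((2:ℝ)+d)/2) * ‖u t‖ ^ d))
          / (‖u t‖ ^ ((2:ℝ)+d))^2
        = (-⟪v t, u t⟫) * ((2+d) * (‖v t‖^2 + ‖S (u t)‖^2 + 2*μ*⟪v t, Q (u t)⟫)
            * (‖u t‖ ^ d / (‖u t‖ ^ ((2:ℝ)+d))^2)) := by
      ring
    rw [hLHS]
    have hcoef : 0 ≤ (2+d) * (‖v t‖^2 + ‖S (u t)‖^2 + 2*μ*⟪v t, Q (u t)⟫)
        * (‖u t‖ ^ d / (‖u t‖ ^ ((2:ℝ)+d))^2) := by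
      apply mul_nonneg (mul_nonneg (by linarith) hEt0)
      positivity
    calc (-⟪v t, u t⟫) * ((2+d) * (‖v t‖^2 + ‖S (u t)‖^2 + 2*μ*⟪v t, Q (u t)⟫)
          * (‖u t‖ ^ d / (‖u t‖ ^ ((2:ℝ)+d))^2))
        ≤ (Real.sqrt (‖v t‖^2 + ‖S (u t)‖^2) * ‖u t‖)
          * ((2+d) * (‖v t‖^2 + ‖S (u t)‖^2 + 2*μ*⟪v t, Q (u t)⟫)
            * (‖u t‖ ^ d / (‖u t‖ ^ ((2:ℝ)+d))^2)) :=
          mul_le_mul_of_nonneg_right hm hcoef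
      _ = (2+d) * (Real.sqrt (‖v t‖^2 + ‖S (u t)‖^2) / ‖u t‖)
          * ((‖v t‖^2 + ‖S (u t)‖^2 + 2*μ*⟪v t, Q (u t)⟫) / ‖u t‖ ^ ((2:ℝ)+d)) := by
          rw [hrd']
          field_simp
  -- final assembly
  have e1' : (((⟪v t, w t⟫ + ⟪w t, v t⟫) + (⟪S (u t), S (v t)⟫ + ⟪S (v t), S (u t)⟫)
        + 2*μ*(⟪v t, Q (v t)⟫ + ⟪w t, Q (u t)⟫)) * ‖u t‖ ^ ((2:ℝ)+d)
      - (‖v t‖^2 + ‖S (u t)‖^2 + 2*μ*⟪v t, Q (u t)⟫)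
        * ((⟪v t, u t⟫ + ⟪v t, u t⟫) * (((2:ℝ)+d)/2) * ‖u t‖ ^ d))
      / (‖u t‖ ^ ((2:ℝ)+d))^2
      = ((⟪v t, w t⟫ + ⟪w t, v t⟫) + (⟪S (u t), S (v t)⟫ + ⟪S (v t), S (u t)⟫)
        + 2*μ*(⟪v t, Q (v t)⟫ + ⟪w t, Q (u t)⟫)) / ‖u t‖ ^ ((2:ℝ)+d)
      + (-((‖v t‖^2 + ‖S (u t)‖^2 + 2*μ*⟪v t, Q (u t)⟫)
          * ((⟪v t, u t⟫ + ⟪v t, u t⟫) * (((2:ℝ)+d)/2) * ‖u t‖ ^ d)))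
        / (‖u t‖ ^ ((2:ℝ)+d))^2 := by
    field_simp
    ring
  have e2' : ((⟪v t, w t⟫ + ⟪w t, v t⟫) + (⟪S (u t), S (v t)⟫ + ⟪S (v t), S (u t)⟫)
        + 2*μ*(⟪v t, Q (v t)⟫ + ⟪w t, Q (u t)⟫)) / ‖u t‖ ^ ((2:ℝ)+d)
      ≤ (-(μ/2)*(‖v t‖^2 + ‖S (u t)‖^2 + 2*μ*⟪v t, Q (u t)⟫) + (2/δ)*‖g t‖^2)
        / ‖u t‖ ^ ((2:ℝ)+d) := by
    exact div_le_div_of_nonneg_right hstepA hNt.le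
  have e3' : (-(μ/2)*(‖v t‖^2 + ‖S (u t)‖^2 + 2*μ*⟪v t, Q (u t)⟫) + (2/δ)*‖g t‖^2)
        / ‖u t‖ ^ ((2:ℝ)+d)
      = -(μ/2) * ((‖v t‖^2 + ‖S (u t)‖^2 + 2*μ*⟪v t, Q (u t)⟫) / ‖u t‖ ^ ((2:ℝ)+d))
        + (2/δ) * (‖g t‖^2 / ‖u t‖ ^ ((2:ℝ)+d)) := by
    ring
  linarith [e1'.le, e1'.ge, e2', hstepB, e3'.le, e3'.ge]
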